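/- Let U be a finite-dimensional indecomposable H_J-tempered module for a parabolic subalgebra H_J of a graded Hecke algebra H. Then any two simple composition factors U_1, U_2 of U satisfy ν(J, U_1) = ν(J, U_2), i.e., the Langlands parameter ν is constant across the composition factors of an indecomposable tempered module. -/

import Mathlib

open scoped TensorProduct

/-!
Statement 14 (Lemma 3.2 of the paper): Let `U` be a finite-dimensional indecomposable
`H_J`-tempered module, where `H_J ≅ H_J^{ss} ⊗ S(V_J^⊥)`.  Then any two simple composition
factors of `U` have the same Langlands parameter `ν(J, ·)`.

Since every simple `H_J`-module is of the form `Ū ⊗ L` with `L` a character of `S(V_J^⊥)`,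
and since `ν(J, Ū ⊗ L)` is determined by the character `L` (equivalently, by the scalar by
which the central elements `1 ⊗ p`, `p ∈ S(V_J^⊥)`, act), the statement says: for each
`p ∈ S(V_J^⊥)` there is a single scalar `c` by which `1 ⊗ p` acts on *every* simple
subquotient of `U`.  We model `H_J^{ss}` by a complex algebra `Hss` and `S(V_J^⊥)` by
`P = MvPolynomial σ ℂ`, and `H_J` by an algebra `HJ` isomorphic to `Hss ⊗[ℂ] P`.
-/

theorem stmt14
    (Hss : Type) [Ring Hss] [Algebra ℂ Hss]
    (σ : Type)
    (HJ : Type) [Ring HJ] [Algebra ℂ HJ]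
    -- `H_J ≅ H_J^{ss} ⊗ S(V_J^⊥)`
    (e : HJ ≃ₐ[ℂ] Hss ⊗[ℂ] MvPolynomial σ ℂ)
    (U : Type) [AddCommGroup U] [Module ℂ U]
    [Module HJ U] [IsScalarTower ℂ HJ U] [FiniteDimensional ℂ U]
    -- `U` is indecomposable
    (hind : ∀ p q : Submodule HJ U, IsCompl p q → p = ⊥ ∨ p = ⊤) :
    ∀ p : MvPolynomial σ ℂ, ∃ c : ℂ,
      ∀ (q : Submodule HJ U) (r : Submodule HJ q),
        IsSimpleModule HJ (q ⧸ r) →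
        ∀ x : q ⧸ r,
          (e.symm ((1 : Hss) ⊗ₜ[ℂ] p)) • x = (algebraMap ℂ HJ c) • x := by
  intro p
  -- the element `z = e.symm (1 ⊗ p)` is central in `HJ`
  set z : HJ := e.symm ((1 : Hss) ⊗ₜ[ℂ] p) with hzdef
  have key : ∀ t : Hss ⊗[ℂ] MvPolynomial σ ℂ,
      ((1 : Hss) ⊗ₜ[ℂ] p) * t = t * ((1 : Hss) ⊗ₜ[ℂ] p) := by
    intro t
    induction t using TensorProduct.induction_on with
    | zero => simp
    | tmul a q => simp [Algebra.TensorProduct.tmul_mul_tmul, mul_comm]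
    | add x y hx hy => rw [mul_add, add_mul, hx, hy]
  have hzc : ∀ a : HJ, z * a = a * z := by
    intro a
    apply e.injective
    rw [map_mul, map_mul, hzdef, AlgEquiv.apply_symm_apply]
    exact key (e a)
  -- scalars from ℂ commute with scalars from HJ on any HJ,ℂ-tower module
  have hsc : ∀ (c : ℂ) (a : HJ) (x : U), c • (a • x) = a • (c • x) := by
    intro c a x
    rw [← algebraMap_smul HJ c (a • x), ← algebraMap_smul HJ c x, ← mul_smul, ← mul_smul,
      Algebra.commutes]
  -- case `U` trivial: vacuous
  rcases subsingleton_or_nontrivial U with hU | hU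
  · refine ⟨0, fun q r hsim x => ?_⟩
    haveI := hsim
    haveI : Nontrivial (q ⧸ r) := IsSimpleModule.nontrivial HJ _
    haveI : Subsingleton q := ⟨fun a b => Subtype.ext (Subsingleton.elim _ _)⟩
    haveI : Subsingleton (q ⧸ r) := Quotient.instSubsingletonQuotient _
    exact (false_of_nontrivial_of_subsingleton (q ⧸ r)).elim
  · -- main case: `U` nontrivial
    -- the endomorphism `x ↦ z • x` as a ℂ-linear map
    let f : U →ₗ[ℂ] U :=
      { toFun := fun x => z • x
        map_add' := fun x y => smul_add z x y
        map_smul' := fun c x => (hsc c z x).symm }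
    obtain ⟨c, hc⟩ := Module.End.exists_eigenvalue f
    refine ⟨c, ?_⟩
    set g : U →ₗ[ℂ] U := f - c • LinearMap.id with hgdef
    have hgapp : ∀ x : U, g x = z • x - c • x := fun x => rfl
    -- `g` commutes with the `HJ`-action
    have hg : ∀ (a : HJ) (x : U), g (a • x) = a • g x := by
      intro a x
      rw [hgapp, hgapp, smul_sub, ← mul_smul, hzc, mul_smul, hsc]
    have hgpow : ∀ (k : ℕ) (a : HJ) (x : U), (g ^ k) (a • x) = a • (g ^ k) x := by
      intro k
      induction k with
      | zero => intro a x; simp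
      | succ m ih =>
        intro a x
        rw [pow_succ, Module.End.mul_apply, Module.End.mul_apply, hg, ih]
    -- Fitting decomposition
    obtain ⟨n, hcompl, hn1⟩ :=
      ((g.eventually_isCompl_ker_pow_range_pow).and (Filter.eventually_ge_atTop 1)).exists
    -- the kernel and range of `g ^ n` as `HJ`-submodules
    let N : Submodule HJ U :=
      { carrier := {x | (g ^ n) x = 0}
        add_mem' := fun hx hy => by simp_all [Set.mem_setOf_eq, map_add]
        zero_mem' := by simp
        smul_mem' := fun a x hx => by
          simp only [Set.mem_setOf_eq] at hx ⊢
          rw [hgpow, hx, smul_zero] }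
    let R : Submodule HJ U :=
      { carrier := {x | ∃ y, (g ^ n) y = x}
        add_mem' := fun {x y} hx hy => by
          obtain ⟨u, hu⟩ := hx; obtain ⟨v, hv⟩ := hy
          exact ⟨u + v, by rw [map_add, hu, hv]⟩
        zero_mem' := ⟨0, map_zero _⟩
        smul_mem' := fun a x hx => by
          obtain ⟨y, hy⟩ := hx
          exact ⟨a • y, by rw [hgpow, hy]⟩ }
    have hmemN : ∀ x : U, x ∈ N ↔ x ∈ LinearMap.ker (g ^ n) := fun x =>
      Iff.rfl
    have hmemR : ∀ x : U, x ∈ R ↔ x ∈ LinearMap.range (g ^ n) := fun x =>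
      ⟨fun ⟨y, hy⟩ => ⟨y, hy⟩, fun ⟨y, hy⟩ => ⟨y, hy⟩⟩
    have hNR : IsCompl N R := by
      constructor
      · intro S hSN hSR x hx
        have h1 : (x : U) ∈ LinearMap.ker (g ^ n) := (hmemN x).mp (hSN hx)
        have h2 : (x : U) ∈ LinearMap.range (g ^ n) := (hmemR x).mp (hSR hx)
        have := hcompl.disjoint.le_bot (Submodule.mem_inf.mpr ⟨h1, h2⟩)
        simpa using this
      · intro S hSN hSR x _
        have hx : x ∈ LinearMap.ker (g ^ n) ⊔ LinearMap.range (g ^ n) := by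
          rw [hcompl.sup_eq_top]; trivial
        obtain ⟨u, hu, v, hv, rfl⟩ := Submodule.mem_sup.mp hx
        exact add_mem (hSN ((hmemN u).mpr hu)) (hSR ((hmemR v).mpr hv))
    -- indecomposability forces `N = ⊤`
    have hNtop : N = ⊤ := by
      rcases hind N R hNR with hbot | htop
      · exfalso
        obtain ⟨v, hv⟩ := hc.exists_hasEigenvector
        have hgv : g v = 0 := by
          have hfv : z • v = c • v := Module.End.mem_eigenspace_iff.mp hv.1
          rw [hgapp, hfv, sub_self]
        obtain ⟨m, rfl⟩ : ∃ m, n = m + 1 := ⟨n - 1, (Nat.succ_pred_eq_of_pos hn1).symm⟩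
        have hvN : v ∈ N := by
          show (g ^ (m + 1)) v = 0
          rw [pow_succ, Module.End.mul_apply, hgv, map_zero]
        rw [hbot] at hvN
        exact hv.2 (by simpa using hvN)
      · exact htop
    have hnil : ∀ x : U, (g ^ n) x = 0 := fun x => by
      have : x ∈ N := hNtop ▸ Submodule.mem_top
      exact this
    -- now pass to simple subquotients
    intro q r hsim x
    haveI := hsim
    set c' : HJ := algebraMap ℂ HJ c with hc'def
    -- the HJ-linear endomorphism `ψ : x ↦ z • x - c' • x` of the subquotient
    have hψsmul : ∀ (M : Type) [AddCommGroup M] [Module HJ M] (a : HJ) (x : M),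
        z • a • x - c' • a • x = a • (z • x - c' • x) := by
      intro M _ _ a x
      rw [smul_smul, smul_smul, hzc, hc'def, Algebra.commutes, mul_smul, mul_smul, ← smul_sub]
    let ψ : (q ⧸ r) →ₗ[HJ] (q ⧸ r) :=
      { toFun := fun x => z • x - c' • x
        map_add' := fun x y => by rw [smul_add, smul_add]; abel
        map_smul' := fun a x => hψsmul _ a x }
    let φ : q →ₗ[HJ] q :=
      { toFun := fun x => z • x - c' • x
        map_add' := fun x y => by rw [smul_add, smul_add]; abel
        map_smul' := fun a x => hψsmul _ a x }
    -- `φ` corresponds to `g` on `U` under the inclusion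
    have hφcoe : ∀ y : q, ((φ y : q) : U) = g (y : U) := by
      intro y
      show ((z • y - c' • y : q) : U) = z • (y : U) - c • (y : U)
      rw [AddSubgroupClass.coe_sub]
      congr 1
      rw [hc'def]
      show ((algebraMap ℂ HJ c • y : q) : U) = c • (y : U)
      rw [Submodule.coe_smul, algebraMap_smul]
    have hφpow : ∀ (k : ℕ) (y : q), (((φ ^ k) y : q) : U) = (g ^ k) (y : U) := by
      intro k
      induction k with
      | zero => intro y; simp
      | succ m ih =>
        intro y
        rw [pow_succ, pow_succ, Module.End.mul_apply, Module.End.mul_apply, ih, hφcoe]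
    have hmk1 : ∀ w : q, ψ (Submodule.Quotient.mk w) = Submodule.Quotient.mk (φ w) := by
      intro w
      show z • (Submodule.Quotient.mk w : q ⧸ r) - c' • (Submodule.Quotient.mk w : q ⧸ r)
          = Submodule.Quotient.mk (z • w - c' • w)
      rw [Submodule.Quotient.mk_sub, Submodule.Quotient.mk_smul, Submodule.Quotient.mk_smul]
    -- `ψ` commutes with the quotient map, hence `ψ ^ n = 0`
    have hmk : ∀ (k : ℕ) (y : q),
        (ψ ^ k) (Submodule.Quotient.mk y) = Submodule.Quotient.mk ((φ ^ k) y) := by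
      intro k
      induction k with
      | zero => intro y; simp
      | succ m ih =>
        intro y
        rw [pow_succ, pow_succ, Module.End.mul_apply, Module.End.mul_apply, hmk1, ih]
    have hψnil : ∀ x : q ⧸ r, (ψ ^ n) x = 0 := by
      intro x
      obtain ⟨y, rfl⟩ := Submodule.Quotient.mk_surjective r x
      rw [hmk]
      have : ((φ ^ n) y : U) = 0 := by rw [hφpow, hnil]
      have h0 : (φ ^ n) y = 0 := Subtype.ext (by simpa using this)
      rw [h0, Submodule.Quotient.mk_zero]
    -- on a simple module a nilpotent HJ-linear endomorphism is zero
    have hker : LinearMap.ker ψ = ⊤ := by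
      rcases eq_bot_or_eq_top (LinearMap.ker ψ) with hbot | htop
      · exfalso
        haveI : Nontrivial (q ⧸ r) := IsSimpleModule.nontrivial HJ _
        obtain ⟨x0, hx0⟩ := exists_ne (0 : q ⧸ r)
        have hinj : Function.Injective ψ := LinearMap.ker_eq_bot.mp hbot
        have hinjn : ∀ k, Function.Injective (ψ ^ k : (q ⧸ r) →ₗ[HJ] (q ⧸ r)) := by
          intro k
          induction k with
          | zero => exact fun a b h => by simpa using h
          | succ m ih =>
            intro a b h
            rw [pow_succ, Module.End.mul_apply, Module.End.mul_apply] at h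
            exact hinj (ih h)
        exact hx0 (hinjn n (by rw [hψnil, hψnil]))
      · exact htop
    have hx : x ∈ LinearMap.ker ψ := hker ▸ Submodule.mem_top
    have hx0 : z • x - c' • x = 0 := hx
    exact sub_eq_zero.mp hx0
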